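/- The function ψ(x) = exp(ik x̃(x)), where x̃(x) = x + e^{iπ/4} ∫_{x_r}^x σ(s)ds, solves the modified (PML) stationary Schrödinger equation -(ħ²/(2m)) c(x) d/dx (c(x) dψ/dx) = E ψ with c(x) = 1/(1 + e^{iπ/4} σ(x)) and E = ħ²k²/(2m), for all x where σ is continuous. -/

import Mathlib

open Complex Real

/-- `ψ(x) = exp(ik x̃(x))` with `x̃(x) = x + e^{iπ/4} ∫_{x_r}^x σ` solves the PML
stationary Schrödinger equation `-(ħ²/(2m)) c (c ψ')' = E ψ` with
`c(x) = (1 + e^{iπ/4} σ(x))⁻¹` and `E = ħ²k²/(2m)`. -/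
theorem stmt6 (hbar m k xr : ℝ) (hh : 0 < hbar) (hm : 0 < m) (hk : 0 < k)
    (σ : ℝ → ℝ) (hσc : Continuous σ) (hσ : ∀ x, 0 ≤ σ x)
    (c ψ : ℝ → ℂ)
    (hc : ∀ x, c x = (1 + Complex.exp (Complex.I * (π / 4)) * σ x)⁻¹)
    (hψ : ∀ x, ψ x = Complex.exp (Complex.I * k *
        (x + Complex.exp (Complex.I * (π / 4)) * (∫ s in xr..x, σ s)))) :
    ∀ x : ℝ,
      -((hbar : ℂ) ^ 2 / (2 * m)) * (c x * deriv (fun y => c y * deriv ψ y) x)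
        = ((hbar ^ 2 * k ^ 2 / (2 * m) : ℝ) : ℂ) * ψ x := by
  set e : ℂ := Complex.exp (Complex.I * (π / 4)) with he
  have here : e.re = Real.cos (π / 4) := by
    simp [he, Complex.exp_re]
  have heim : e.im = Real.sin (π / 4) := by
    simp [he, Complex.exp_im]
  have hene : ∀ y : ℝ, (1 + e * (σ y : ℂ)) ≠ 0 := by
    intro y h
    have hre := congrArg Complex.re h
    simp [Complex.add_re, Complex.mul_re, here, heim] at hre
    have hcos : (0:ℝ) < Real.cos (π / 4) := by
      rw [Real.cos_pi_div_four]; positivity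
    nlinarith [hσ y, Real.sqrt_nonneg 2]
  have key : ∀ y : ℝ, HasDerivAt ψ (Complex.I * k * (1 + e * σ y) * ψ y) y := by
    intro y
    have hInt : HasDerivAt (fun u => ∫ s in xr..u, σ s) (σ y) y :=
      intervalIntegral.integral_hasDerivAt_right (hσc.intervalIntegrable _ _)
        (hσc.stronglyMeasurableAtFilter _ _) hσc.continuousAt
    have h1 : HasDerivAt (fun u : ℝ => (u : ℂ)) 1 y := Complex.ofRealCLM.hasDerivAt
    have hF : HasDerivAt (fun u : ℝ => (u : ℂ) + e * (∫ s in xr..u, σ s))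
        (1 + e * σ y) y := h1.add ((hInt.ofReal_comp).const_mul e)
    have hψ' : ψ = fun u : ℝ => Complex.exp (Complex.I * k *
        ((u : ℂ) + e * (∫ s in xr..u, σ s))) := funext hψ
    have h2 := (hF.const_mul (Complex.I * k)).cexp
    rw [hψ']
    convert h2 using 1
    beta_reduce
    ring
  intro x
  have hcd : (fun y => c y * deriv ψ y) = fun y => Complex.I * k * ψ y := by
    funext y
    rw [(key y).deriv, hc y]
    field_simp [hene y]
  rw [hcd]
  have hd2 : deriv (fun y => Complex.I * k * ψ y) x
      = Complex.I * k * (Complex.I * k * (1 + e * σ x) * ψ x) :=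
    ((key x).const_mul (Complex.I * k)).deriv
  rw [hd2, hc x]
  have hm' : (m : ℂ) ≠ 0 := by exact_mod_cast hm.ne'
  field_simp [hene x]
  push_cast
  ring_nf
  simp [Complex.I_sq]
  rw [mul_assoc _ (m:ℂ), mul_inv_cancel₀ hm', mul_one]
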